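/- arXiv:1905.00113 — 3 statements merged into one kernel-verified Lean document; each statement's English description precedes it below -/
import Mathlib

section
/- Let Φ be a frame for H, A ∈ B(H) with ‖Id − A‖ < 1 (hence A invertible), and let Θ ∈ B(H, ℓ²) satisfy T_Φ Θ = 0. Define the approximately dual frame Φ_Θ^{ad}(A) with n-th element A* S_Φ⁻¹ φₙ + Θ*(δₙ), where (δₙ) is the canonical basis of ℓ². Then its analysis operator U satisfies ‖U‖² ≥ 1/(m_Φ^{opt} ‖A⁻¹‖²), where m_Φ^{opt} is the optimal lower frame bound of Φ. -/
open ContinuousLinearMap MeasureTheory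
open scoped InnerProductSpace ComplexConjugate

noncomputable section

notation "ℓ²" => lp (fun _ : ℕ => ℂ) 2

variable {H : Type} [NormedAddCommGroup H] [InnerProductSpace ℂ H] [CompleteSpace H]

/-- `Φ = (φₙ)` is a frame for `H` with lower bound `m` and upper bound `M`. -/
def IsFrame (φ : ℕ → H) (m M : ℝ) : Prop :=
  0 < m ∧ 0 < M ∧ ∀ f : H,
    m * ‖f‖ ^ 2 ≤ ∑' n, ‖(inner ℂ (φ n) f : ℂ)‖ ^ 2 ∧
    ∑' n, ‖(inner ℂ (φ n) f : ℂ)‖ ^ 2 ≤ M * ‖f‖ ^ 2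

/-- `Φ = (φₙ)` is a Bessel sequence with bound `M`. -/
def IsBessel (φ : ℕ → H) (M : ℝ) : Prop :=
  0 < M ∧ ∀ f : H, ∑' n, ‖(inner ℂ (φ n) f : ℂ)‖ ^ 2 ≤ M * ‖f‖ ^ 2

/-- `U` is the analysis operator of the sequence `Φ = (φₙ)`, i.e. `U f = (⟨f, φₙ⟩)ₙ`. -/
def IsAnalysis (φ : ℕ → H) (U : H →L[ℂ] ℓ²) : Prop :=
  ∀ (f : H) (n : ℕ), U f n = (inner ℂ (φ n) f : ℂ)

/-- Orthogonal projection onto a closed submodule, as an endomorphism. -/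
def orthProj {E : Type} [NormedAddCommGroup E] [InnerProductSpace ℂ E] [CompleteSpace E]
    (K : Submodule ℂ E) (hK : IsClosed (K : Set E)) : E →L[ℂ] E :=
  haveI := hK.completeSpace_coe
  K.subtypeL.comp (K.orthogonalProjection)

/-- Orthogonal projection onto a closed submodule, with values in the submodule. -/
def orthProjTo {E : Type} [NormedAddCommGroup E] [InnerProductSpace ℂ E] [CompleteSpace E]
    (K : Submodule ℂ E) (hK : IsClosed (K : Set E)) : E →L[ℂ] K :=
  haveI := hK.completeSpace_coe
  K.orthogonalProjection

/-- The gap `δ(X, Y) = ‖(Id - P_Y)|_X‖` from `X` to a closed subspace `Y`. -/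
def gap {E : Type} [NormedAddCommGroup E] [InnerProductSpace ℂ E] [CompleteSpace E]
    (X Y : Submodule ℂ E) (hY : IsClosed (Y : Set E)) : ℝ :=
  ‖(ContinuousLinearMap.id ℂ E - orthProj Y hY).comp X.subtypeL‖

set_option maxHeartbeats 1000000 in
theorem stmt5
    (φ φad : ℕ → H) (mΦ MΦ mopt : ℝ)
    (UΦ Uad : H →L[ℂ] ℓ²) (TΦ : ℓ² →L[ℂ] H) (SΦ SΦinv A Ainv : H →L[ℂ] H)
    (Θ : H →L[ℂ] ℓ²)
    (hUΦ : IsAnalysis φ UΦ) (hTΦ : TΦ = adjoint UΦ) (hSΦ : SΦ = TΦ ∘L UΦ)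
    (hinv1 : SΦ ∘L SΦinv = ContinuousLinearMap.id ℂ H)
    (hinv2 : SΦinv ∘L SΦ = ContinuousLinearMap.id ℂ H)
    (hΦ : IsFrame φ mΦ MΦ)
    (hA : ‖ContinuousLinearMap.id ℂ H - A‖ < 1)
    (hAinv1 : A ∘L Ainv = ContinuousLinearMap.id ℂ H)
    (hAinv2 : Ainv ∘L A = ContinuousLinearMap.id ℂ H)
    (hΘ : TΦ ∘L Θ = 0)
    (hφad : ∀ n, φad n = adjoint A (SΦinv (φ n)) + adjoint Θ (lp.single 2 n (1 : ℂ)))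
    (hUad : IsAnalysis φad Uad)
    (hmopt : mopt = sSup {m : ℝ | ∀ f : H, m * ‖f‖ ^ 2 ≤ ∑' n, ‖(inner ℂ (φ n) f : ℂ)‖ ^ 2}) :
    1 / (mopt * ‖Ainv‖ ^ 2) ≤ ‖Uad‖ ^ 2 := by
  obtain ⟨hm, hM, hfr⟩ := hΦ
  set S : Set ℝ := {m : ℝ | ∀ f : H, m * ‖f‖ ^ 2 ≤ ∑' n, ‖(inner ℂ (φ n) f : ℂ)‖ ^ 2} with hS
  -- sum = ‖UΦ f‖²
  have hsum : ∀ f : H, ∑' n, ‖(inner ℂ (φ n) f : ℂ)‖ ^ 2 = ‖UΦ f‖ ^ 2 := by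
    intro f
    have h := lp.norm_rpow_eq_tsum (p := 2) (by norm_num) (UΦ f)
    have h2 : (2 : ENNReal).toReal = 2 := by norm_num
    rw [h2] at h
    calc ∑' n, ‖(inner ℂ (φ n) f : ℂ)‖ ^ 2 = ∑' n, ‖UΦ f n‖ ^ (2:ℝ) := by
          congr 1; ext n; rw [hUΦ f n, ← Real.rpow_natCast]; norm_num
      _ = ‖UΦ f‖ ^ (2:ℝ) := h.symm
      _ = ‖UΦ f‖ ^ 2 := by rw [← Real.rpow_natCast]; norm_num
  -- subsingleton case
  by_cases hsub : Subsingleton H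
  · have hSuniv : S = Set.univ := by
      ext m; simp only [Set.mem_univ, iff_true, hS, Set.mem_setOf_eq]
      intro f
      have : f = 0 := Subsingleton.elim f 0
      simp [this]
    have : ¬ BddAbove S := by
      rw [hSuniv]
      exact not_bddAbove_univ
    have hmopt0 : mopt = 0 := by rw [hmopt]; exact Real.sSup_of_not_bddAbove this
    rw [hmopt0, zero_mul, div_zero]
    positivity
  -- nontrivial case
  have : Nontrivial H := not_subsingleton_iff_nontrivial.mp hsub
  obtain ⟨f₀, hf₀⟩ := exists_ne (0 : H)
  have hf₀n : 0 < ‖f₀‖ := norm_pos_iff.mpr hf₀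
  -- adjoint facts
  have hTadj : adjoint TΦ = UΦ := by rw [hTΦ, adjoint_adjoint]
  have hSsa : adjoint SΦ = SΦ := by rw [hSΦ, adjoint_comp, hTadj, ← hTΦ]
  have hSinvSa : adjoint SΦinv = SΦinv := by
    have h1 : adjoint SΦinv ∘L SΦ = ContinuousLinearMap.id ℂ H := by
      have := congrArg adjoint hinv1
      rwa [adjoint_comp, hSsa, adjoint_id] at this
    calc adjoint SΦinv = adjoint SΦinv ∘L (SΦ ∘L SΦinv) := by rw [hinv1]; rfl
      _ = (adjoint SΦinv ∘L SΦ) ∘L SΦinv := by rw [comp_assoc]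
      _ = SΦinv := by rw [h1]; rfl
  -- Uad f = UΦ (SΦinv (A f)) + Θ f
  have hUadf : ∀ f : H, Uad f = UΦ (SΦinv (A f)) + Θ f := by
    intro f
    apply lp.ext
    funext n
    have hrhs : (UΦ (SΦinv (A f)) + Θ f : ℓ²) n = UΦ (SΦinv (A f)) n + Θ f n := rfl
    rw [hrhs, hUad f n, hφad n, inner_add_left, adjoint_inner_left, adjoint_inner_left,
      hUΦ _ n]
    congr 1
    · rw [← hSinvSa, adjoint_inner_left, hSinvSa]
    · rw [lp.inner_single_left]
      simp [inner]
  -- TΦ ∘L Uad = A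
  have hTU : TΦ ∘L Uad = A := by
    ext f
    have h0 : TΦ (Θ f) = 0 := by
      have := congrArg (fun (B : H →L[ℂ] H) => B f) hΘ
      simpa using this
    have h1 : TΦ (UΦ (SΦinv (A f))) = A f := by
      have := congrArg (fun (B : H →L[ℂ] H) => B (A f)) hinv1
      simpa [hSΦ] using this
    simp [hUadf f, map_add, h0, h1]
  -- key norm inequality
  have hAadj : adjoint A = adjoint Uad ∘L UΦ := by
    rw [← hTU, adjoint_comp, hTadj]
  have hid : adjoint Ainv ∘L adjoint A = ContinuousLinearMap.id ℂ H := by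
    have := congrArg adjoint hAinv1
    rwa [adjoint_comp, adjoint_id] at this
  have key : ∀ g : H, ‖g‖ ≤ ‖Ainv‖ * (‖Uad‖ * ‖UΦ g‖) := by
    intro g
    have hg : g = adjoint Ainv (adjoint Uad (UΦ g)) := by
      have hid2 : adjoint Ainv ∘L (adjoint Uad ∘L UΦ) = ContinuousLinearMap.id ℂ H := by
        rw [← hAadj]; exact hid
      have h := congrArg (fun (B : H →L[ℂ] H) => B g) hid2
      simp only [coe_comp', Function.comp_apply, coe_id', id_eq] at h
      exact h.symm
    calc ‖g‖ = ‖adjoint Ainv (adjoint Uad (UΦ g))‖ := by rw [← hg]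
      _ ≤ ‖adjoint Ainv‖ * ‖adjoint Uad (UΦ g)‖ := le_opNorm _ _
      _ ≤ ‖adjoint Ainv‖ * (‖adjoint Uad‖ * ‖UΦ g‖) := by
          gcongr; exact le_opNorm _ _
      _ = ‖Ainv‖ * (‖Uad‖ * ‖UΦ g‖) := by
          rw [LinearIsometryEquiv.norm_map ContinuousLinearMap.adjoint,
            LinearIsometryEquiv.norm_map ContinuousLinearMap.adjoint]
  -- ‖Ainv‖, ‖Uad‖ positive
  have hAinvpos : 0 < ‖Ainv‖ := by
    rcases (norm_nonneg Ainv).lt_or_eq with h | h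
    · exact h
    · exfalso
      have hk := key f₀
      rw [← h, zero_mul] at hk
      exact hf₀ (norm_le_zero_iff.mp hk)
  have hUadpos : 0 < ‖Uad‖ := by
    rcases (norm_nonneg Uad).lt_or_eq with h | h
    · exact h
    · exfalso
      have hk := key f₀
      rw [← h, zero_mul, mul_zero] at hk
      exact hf₀ (norm_le_zero_iff.mp hk)
  -- c ∈ S
  set c : ℝ := 1 / (‖Ainv‖ ^ 2 * ‖Uad‖ ^ 2) with hc
  have hcpos : 0 < c := by positivity
  have hcS : c ∈ S := by
    intro f
    have hk := key f
    have hUf : 0 ≤ ‖UΦ f‖ := norm_nonneg _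
    have hnf : 0 ≤ ‖f‖ := norm_nonneg _
    have h2 : ‖f‖ ^ 2 ≤ ‖Ainv‖ ^ 2 * ‖Uad‖ ^ 2 * ‖UΦ f‖ ^ 2 := by
      have := pow_le_pow_left₀ hnf hk 2
      calc ‖f‖ ^ 2 ≤ (‖Ainv‖ * (‖Uad‖ * ‖UΦ f‖)) ^ 2 := this
        _ = ‖Ainv‖ ^ 2 * ‖Uad‖ ^ 2 * ‖UΦ f‖ ^ 2 := by ring
    rw [hsum f, hc]
    rw [div_mul_eq_mul_div, one_mul, div_le_iff₀ (by positivity)]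
    nlinarith
  -- S bounded above
  have hbdd : BddAbove S := by
    refine ⟨MΦ, fun m hmS => ?_⟩
    have h1 := hmS f₀
    have h2 := (hfr f₀).2
    have h3 : m * ‖f₀‖ ^ 2 ≤ MΦ * ‖f₀‖ ^ 2 := le_trans h1 h2
    exact le_of_mul_le_mul_right h3 (by positivity : (0:ℝ) < ‖f₀‖ ^ 2)
  have hcle : c ≤ mopt := by
    rw [hmopt]
    exact le_csSup hbdd hcS
  have hmoptpos : 0 < mopt := lt_of_lt_of_le hcpos hcle
  -- final computation
  rw [div_le_iff₀ (by positivity)]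
  have h1 : 1 ≤ mopt * (‖Ainv‖ ^ 2 * ‖Uad‖ ^ 2) := by
    rw [hc] at hcle
    rw [div_le_iff₀ (by positivity)] at hcle
    linarith
  nlinarith

end
end

section
/- Let Φ be a frame with lower bound m_Φ, Ψ a Bessel sequence with ‖T_Φ − T_Ψ‖ ≤ μ < √m_Φ (so Ψ is a frame), and A₁, A₂ ∈ B(H) with ‖Id − Aᵢ‖ < 1. Then the canonical approximately duals satisfy ‖T_{Φ₀^{ad}(A₁)} − T_{Ψ₀^{ad}(A₂)}‖ ≤ 2μ‖A₁‖/(√m_Φ(√m_Φ − μ)) + ‖A₁ − A₂‖/(√m_Φ − μ). -/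
open ContinuousLinearMap MeasureTheory
open scoped InnerProductSpace ComplexConjugate

noncomputable section

variable {H : Type} [NormedAddCommGroup H] [InnerProductSpace ℂ H] [CompleteSpace H]

section helpers

variable {E : Type} [NormedAddCommGroup E] [InnerProductSpace ℂ E] [CompleteSpace E]
  {K L : Submodule ℂ E}

lemma orthProj_mem (hK : IsClosed (K : Set E)) (x : E) : orthProj K hK x ∈ K := by
  haveI := hK.completeSpace_coe
  exact (K.orthogonalProjection x).2

lemma sub_orthProj_mem (hK : IsClosed (K : Set E)) (x : E) : x - orthProj K hK x ∈ Kᗮ := by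
  haveI := hK.completeSpace_coe
  exact K.sub_starProjection_mem_orthogonal x

lemma orthProj_norm_le (hK : IsClosed (K : Set E)) (x : E) : ‖orthProj K hK x‖ ≤ ‖x‖ := by
  haveI := hK.completeSpace_coe
  calc ‖orthProj K hK x‖ = ‖K.orthogonalProjection x‖ := rfl
    _ ≤ ‖(K.orthogonalProjection : E →L[ℂ] K)‖ * ‖x‖ := (K.orthogonalProjection).le_opNorm x
    _ ≤ 1 * ‖x‖ := by
        exact mul_le_mul_of_nonneg_right (K.orthogonalProjectionOnto_norm_le) (norm_nonneg x)
    _ = ‖x‖ := one_mul _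

lemma le_of_mul_self_le {x y : ℝ} (hx : 0 ≤ x) (hy : 0 ≤ y) (h : x * x ≤ y * y) :
    x ≤ y := by
  have h2 := Real.sqrt_le_sqrt h
  rwa [Real.sqrt_mul_self hx, Real.sqrt_mul_self hy] at h2

/-- helper: from a^2 ≤ b*a with a,b ≥ 0, get a ≤ b -/
lemma le_of_sq_le_mul {a b : ℝ} (ha : 0 ≤ a) (hb : 0 ≤ b) (h : a ^ 2 ≤ b * a) : a ≤ b := by
  rcases eq_or_lt_of_le ha with h0 | h0
  · rw [← h0]; exact hb
  · have := le_of_mul_le_mul_right (by nlinarith : a * a ≤ b * a) h0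
    exact this

lemma norm_sub_orthProj_le (hK : IsClosed (K : Set E)) (x v : E) (hv : v ∈ K) :
    ‖x - orthProj K hK x‖ ≤ ‖x - v‖ := by
  set p := orthProj K hK x with hp
  have h0 : (inner ℂ (x - p) (p - v) : ℂ) = 0 :=
    Submodule.inner_left_of_mem_orthogonal (K.sub_mem (orthProj_mem hK x) hv)
      (sub_orthProj_mem hK x)
  have hsum : x - p + (p - v) = x - v := by abel
  have hpyth := norm_add_sq_eq_norm_sq_add_norm_sq_of_inner_eq_zero (x - p) (p - v) h0
  rw [hsum] at hpyth
  have h1 : ‖x - p‖ ^ 2 ≤ ‖x - v‖ ^ 2 := by nlinarith [sq_nonneg ‖p - v‖]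
  nlinarith [norm_nonneg (x - p), norm_nonneg (x - v)]

lemma proj_diff_bound (hK : IsClosed (K : Set E)) (hL : IsClosed (L : Set E))
    {a : ℝ} (ha : 0 ≤ a)
    (hKL : ∀ x ∈ K, ‖x - orthProj L hL x‖ ≤ a * ‖x‖)
    (hLK : ∀ x ∈ L, ‖x - orthProj K hK x‖ ≤ a * ‖x‖)
    (c : E) : ‖orthProj K hK c - orthProj L hL c‖ ≤ a * ‖c‖ := by
  obtain ⟨P, hP⟩ : ∃ P : E →L[ℂ] E, P = orthProj K hK := ⟨_, rfl⟩
  obtain ⟨P', hP'⟩ : ∃ P' : E →L[ℂ] E, P' = orthProj L hL := ⟨_, rfl⟩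
  have hPmem : ∀ x : E, P x ∈ K := fun x => hP ▸ orthProj_mem hK x
  have hP'mem : ∀ x : E, P' x ∈ L := fun x => hP' ▸ orthProj_mem hL x
  have hPsub : ∀ x : E, x - P x ∈ Kᗮ := fun x => hP ▸ sub_orthProj_mem hK x
  have hP'sub : ∀ x : E, x - P' x ∈ Lᗮ := fun x => hP' ▸ sub_orthProj_mem hL x
  have hKL' : ∀ x ∈ K, ‖x - P' x‖ ≤ a * ‖x‖ := fun x hx => hP' ▸ hKL x hx
  have hLK' : ∀ x ∈ L, ‖x - P x‖ ≤ a * ‖x‖ := fun x hx => hP ▸ hLK x hx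
  rw [← hP, ← hP']
  obtain ⟨w, hw⟩ : ∃ w : E, w = c - P' c := ⟨_, rfl⟩
  -- ‖P w‖ ≤ a * ‖w‖
  have hPw : ‖P w‖ ≤ a * ‖w‖ := by
    have h1 : (inner ℂ (P w) (w - P w) : ℂ) = 0 :=
      Submodule.inner_right_of_mem_orthogonal (hPmem w) (hPsub w)
    have hwL : w ∈ Lᗮ := hw ▸ hP'sub c
    have h2 : (inner ℂ (P' (P w)) w : ℂ) = 0 :=
      Submodule.inner_right_of_mem_orthogonal (hP'mem (P w)) hwL
    have h3 : (inner ℂ (P w) (P w) : ℂ) = inner ℂ (P w - P' (P w)) w := by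
      have h5 : (inner ℂ (P w) w : ℂ) = inner ℂ (P w) (P w) := by
        have h6 := inner_sub_right (𝕜 := ℂ) (P w) w (P w)
        rw [h1] at h6
        linear_combination -h6
      rw [inner_sub_left, h2, sub_zero, h5]
    have h4 : ‖P w‖ ^ 2 ≤ ‖P w - P' (P w)‖ * ‖w‖ := by
      calc ‖P w‖ ^ 2 = RCLike.re (inner ℂ (P w) (P w) : ℂ) :=
            (inner_self_eq_norm_sq (𝕜 := ℂ) (P w)).symm
        _ = RCLike.re (inner ℂ (P w - P' (P w)) w : ℂ) := by rw [h3]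
        _ ≤ ‖P w - P' (P w)‖ * ‖w‖ := re_inner_le_norm _ _
    have h5 : ‖P w - P' (P w)‖ ≤ a * ‖P w‖ := hKL' (P w) (hPmem w)
    have h6 : ‖P w‖ ^ 2 ≤ (a * ‖w‖) * ‖P w‖ := by
      calc ‖P w‖ ^ 2 ≤ ‖P w - P' (P w)‖ * ‖w‖ := h4
        _ ≤ (a * ‖P w‖) * ‖w‖ := mul_le_mul_of_nonneg_right h5 (norm_nonneg w)
        _ = (a * ‖w‖) * ‖P w‖ := by ring
    exact le_of_sq_le_mul (norm_nonneg _) (by positivity) h6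
  -- decomposition
  have hdec : P c - P' c = (P (P' c) - P' c) + P w := by
    have h7 : P c = P (P' c) + P w := by
      rw [hw, map_sub]; abel
    rw [h7]; abel
  have hu : (inner ℂ (P (P' c) - P' c) (P w) : ℂ) = 0 := by
    have huK : P (P' c) - P' c ∈ Kᗮ := by
      have h8 := hPsub (P' c)
      simpa using Kᗮ.neg_mem h8
    exact Submodule.inner_left_of_mem_orthogonal (hPmem w) huK
  have hpyth := norm_add_sq_eq_norm_sq_add_norm_sq_of_inner_eq_zero _ _ hu
  rw [← hdec] at hpyth
  have hc : ‖c‖ * ‖c‖ = ‖P' c‖ * ‖P' c‖ + ‖w‖ * ‖w‖ := by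
    have hwL : w ∈ Lᗮ := hw ▸ hP'sub c
    have h0 : (inner ℂ (P' c) w : ℂ) = 0 :=
      Submodule.inner_right_of_mem_orthogonal (hP'mem c) hwL
    have h9 := norm_add_sq_eq_norm_sq_add_norm_sq_of_inner_eq_zero _ _ h0
    rw [show P' c + w = c by rw [hw]; abel] at h9
    exact h9
  have hu2 : ‖P (P' c) - P' c‖ ≤ a * ‖P' c‖ := by
    have h10 := hLK' (P' c) (hP'mem c)
    rwa [norm_sub_rev] at h10
  have hc2 : (a * ‖c‖) * (a * ‖c‖) =
      (a * ‖P' c‖) * (a * ‖P' c‖) + (a * ‖w‖) * (a * ‖w‖) := by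
    linear_combination (a * a) * hc
  have hfin : ‖P c - P' c‖ * ‖P c - P' c‖ ≤ (a * ‖c‖) * (a * ‖c‖) := by
    have t1 := mul_self_le_mul_self (norm_nonneg (P (P' c) - P' c)) hu2
    have t2 := mul_self_le_mul_self (norm_nonneg (P w)) hPw
    linarith
  exact le_of_mul_self_le (norm_nonneg _) (by positivity) hfin

end helpers

lemma bound_of_closure {E F : Type} [NormedAddCommGroup E] [NormedSpace ℂ E]
    [NormedAddCommGroup F] [NormedSpace ℂ F]
    (D : E →L[ℂ] F) (k : ℝ) (s : Set E)
    (h : ∀ x ∈ s, ‖D x‖ ≤ k * ‖x‖) {x : E} (hx : x ∈ closure s) : ‖D x‖ ≤ k * ‖x‖ :=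
  closure_minimal h (isClosed_le D.continuous.norm (continuous_const.mul continuous_norm)) hx

lemma analysis_lower {φ : ℕ → H} {U : H →L[ℂ] ℓ²} (hU : IsAnalysis φ U) {m : ℝ}
    (hm : 0 ≤ m) (h : ∀ f : H, m * ‖f‖ ^ 2 ≤ ∑' n, ‖(inner ℂ (φ n) f : ℂ)‖ ^ 2) (f : H) :
    Real.sqrt m * ‖f‖ ≤ ‖U f‖ := by
  have h2 : ‖U f‖ ^ (2 : ℝ) = ∑' n, ‖(U f) n‖ ^ (2 : ℝ) := by
    simpa using lp.norm_rpow_eq_tsum (p := 2) (by norm_num) (U f)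
  have h3 : ‖U f‖ ^ 2 = ∑' n, ‖(inner ℂ (φ n) f : ℂ)‖ ^ 2 := by
    rw [show ((2 : ℝ)) = ((2 : ℕ) : ℝ) by norm_num] at h2
    simp only [Real.rpow_natCast] at h2
    rw [h2]
    exact tsum_congr fun n => by rw [hU f n]
  have h4 : m * ‖f‖ ^ 2 ≤ ‖U f‖ ^ 2 := (h f).trans_eq h3.symm
  have h5 := Real.sqrt_le_sqrt h4
  rwa [Real.sqrt_mul hm, Real.sqrt_sq (norm_nonneg f), Real.sqrt_sq (norm_nonneg _)] at h5

lemma pseudo_bound {U : H →L[ℂ] ℓ²} {Sinv : H →L[ℂ] H}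
    (hS : ((adjoint U ∘L U) ∘L Sinv) = ContinuousLinearMap.id ℂ H)
    {s : ℝ} (hlow : ∀ f : H, s * ‖f‖ ≤ ‖U f‖) (c : ℓ²) :
    s * ‖Sinv (adjoint U c)‖ ≤ ‖c‖ := by
  obtain ⟨g, hg⟩ : ∃ g : H, g = Sinv (adjoint U c) := ⟨_, rfl⟩
  rw [← hg]
  have e1 : adjoint U (U g) = adjoint U c := by
    have h0 := congrArg (fun L : H →L[ℂ] H => L (adjoint U c)) hS
    simpa [hg, ContinuousLinearMap.comp_apply] using h0
  have e2 : (inner ℂ (U g) (U g) : ℂ) = inner ℂ c (U g) := by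
    rw [← adjoint_inner_left U g (U g), e1, adjoint_inner_left]
  have e3 : ‖U g‖ * ‖U g‖ ≤ ‖c‖ * ‖U g‖ := by
    have h4 : ‖U g‖ ^ 2 = RCLike.re (inner ℂ c (U g) : ℂ) := by
      rw [← e2]; exact (inner_self_eq_norm_sq (𝕜 := ℂ) (U g)).symm
    have h5 : RCLike.re (inner ℂ c (U g) : ℂ) ≤ ‖c‖ * ‖U g‖ := re_inner_le_norm c (U g)
    nlinarith
  have e4 : ‖U g‖ ≤ ‖c‖ := by
    rcases eq_or_lt_of_le (norm_nonneg (U g)) with h0 | h0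
    · rw [← h0]; exact norm_nonneg c
    · exact le_of_mul_le_mul_right e3 h0
  exact (hlow g).trans e4

lemma adjoint_ker {U : H →L[ℂ] ℓ²} {c : ℓ²}
    (hc : c ∈ ((LinearMap.range (U : H →ₗ[ℂ] ℓ²)).topologicalClosure)ᗮ) : adjoint U c = 0 := by
  have h1 : (inner ℂ (adjoint U c) (adjoint U c) : ℂ) = 0 := by
    rw [adjoint_inner_right]
    refine Submodule.inner_right_of_mem_orthogonal ?_ hc
    exact (LinearMap.range (U : H →ₗ[ℂ] ℓ²)).le_topologicalClosure (LinearMap.mem_range_self _ _)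
  exact inner_self_eq_zero.mp h1

set_option maxHeartbeats 2000000 in
theorem stmt11
    (φ ψ : ℕ → H) (mΦ MΦ MΨ μ : ℝ)
    (UΦ UΨ : H →L[ℂ] ℓ²) (TΦ TΨ : ℓ² →L[ℂ] H)
    (SΦ SΦinv SΨ SΨinv A1 A2 : H →L[ℂ] H)
    (hUΦ : IsAnalysis φ UΦ) (hUΨ : IsAnalysis ψ UΨ)
    (hTΦ : TΦ = adjoint UΦ) (hTΨ : TΨ = adjoint UΨ)
    (hSΦ : SΦ = TΦ ∘L UΦ) (hSΨ : SΨ = TΨ ∘L UΨ)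
    (hSΦ1 : SΦ ∘L SΦinv = ContinuousLinearMap.id ℂ H)
    (hSΦ2 : SΦinv ∘L SΦ = ContinuousLinearMap.id ℂ H)
    (hSΨ1 : SΨ ∘L SΨinv = ContinuousLinearMap.id ℂ H)
    (hSΨ2 : SΨinv ∘L SΨ = ContinuousLinearMap.id ℂ H)
    (hΦ : IsFrame φ mΦ MΦ) (hΨ : IsBessel ψ MΨ)
    (hμ : μ < Real.sqrt mΦ) (hper : ‖TΦ - TΨ‖ ≤ μ)
    (hA1 : ‖ContinuousLinearMap.id ℂ H - A1‖ < 1)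
    (hA2 : ‖ContinuousLinearMap.id ℂ H - A2‖ < 1) :
    ‖adjoint A1 ∘L (SΦinv ∘L TΦ) - adjoint A2 ∘L (SΨinv ∘L TΨ)‖ ≤
      2 * μ * ‖A1‖ / (Real.sqrt mΦ * (Real.sqrt mΦ - μ)) +
        ‖A1 - A2‖ / (Real.sqrt mΦ - μ) := by
  obtain ⟨hmΦ, -, hframe⟩ := hΦ
  have hμ0 : 0 ≤ μ := le_trans (norm_nonneg _) hper
  set s := Real.sqrt mΦ with hs_def
  have hs : 0 < s := Real.sqrt_pos.mpr hmΦ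
  have hsμ : 0 < s - μ := sub_pos.mpr hμ
  have hUdiff : ‖UΦ - UΨ‖ ≤ μ := by
    have h1 : UΦ - UΨ = adjoint (TΦ - TΨ) := by
      rw [map_sub, hTΦ, hTΨ, adjoint_adjoint, adjoint_adjoint]
    rw [h1, adjoint.norm_map]
    exact hper
  have hUΦlow : ∀ f : H, s * ‖f‖ ≤ ‖UΦ f‖ :=
    analysis_lower hUΦ hmΦ.le (fun f => (hframe f).1)
  have haux : ∀ f : H, ‖UΦ f - UΨ f‖ ≤ μ * ‖f‖ := by
    intro f
    calc ‖UΦ f - UΨ f‖ = ‖(UΦ - UΨ) f‖ := by rw [ContinuousLinearMap.sub_apply]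
      _ ≤ ‖UΦ - UΨ‖ * ‖f‖ := (UΦ - UΨ).le_opNorm f
      _ ≤ μ * ‖f‖ := mul_le_mul_of_nonneg_right hUdiff (norm_nonneg f)
  have hUΨlow : ∀ f : H, (s - μ) * ‖f‖ ≤ ‖UΨ f‖ := by
    intro f
    have h1 := hUΦlow f
    have h2 := haux f
    have h3 := norm_sub_norm_le (UΦ f) (UΨ f)
    linarith
  -- pseudoinverse bounds
  have hXb : ∀ c : ℓ², s * ‖SΦinv (TΦ c)‖ ≤ ‖c‖ := by
    intro c
    have h1 : ((adjoint UΦ ∘L UΦ) ∘L SΦinv) = ContinuousLinearMap.id ℂ H := by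
      rw [← hTΦ, ← hSΦ]; exact hSΦ1
    have h2 := pseudo_bound h1 hUΦlow c
    rwa [← hTΦ] at h2
  have hYb : ∀ c : ℓ², (s - μ) * ‖SΨinv (TΨ c)‖ ≤ ‖c‖ := by
    intro c
    have h1 : ((adjoint UΨ ∘L UΨ) ∘L SΨinv) = ContinuousLinearMap.id ℂ H := by
      rw [← hTΨ, ← hSΨ]; exact hSΨ1
    have h2 := pseudo_bound h1 hUΨlow c
    rwa [← hTΨ] at h2
  -- closed ranges
  have hKΦ : IsClosed (((LinearMap.range (UΦ : H →ₗ[ℂ] ℓ²)).topologicalClosure : Submodule ℂ ℓ²) : Set ℓ²) :=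
    Submodule.isClosed_topologicalClosure _
  have hKΨ : IsClosed (((LinearMap.range (UΨ : H →ₗ[ℂ] ℓ²)).topologicalClosure : Submodule ℂ ℓ²) : Set ℓ²) :=
    Submodule.isClosed_topologicalClosure _
  -- kernel facts
  have hTΦker : ∀ c : ℓ², TΦ c = TΦ (orthProj _ hKΦ c) := by
    intro c
    have h1 : TΦ (c - orthProj _ hKΦ c) = 0 := by
      rw [hTΦ]; exact adjoint_ker (sub_orthProj_mem hKΦ c)
    rw [map_sub] at h1
    have := sub_eq_zero.mp h1
    exact this
  have hTΨker : ∀ c : ℓ², TΨ c = TΨ (orthProj _ hKΨ c) := by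
    intro c
    have h1 : TΨ (c - orthProj _ hKΨ c) = 0 := by
      rw [hTΨ]; exact adjoint_ker (sub_orthProj_mem hKΨ c)
    rw [map_sub] at h1
    exact sub_eq_zero.mp h1
  -- gap bounds
  have hGapΦ : ∀ x ∈ (LinearMap.range (UΦ : H →ₗ[ℂ] ℓ²)).topologicalClosure,
      ‖x - orthProj _ hKΨ x‖ ≤ (μ / (s - μ)) * ‖x‖ := by
    intro x hx
    have hx' : x ∈ closure ((LinearMap.range (UΦ : H →ₗ[ℂ] ℓ²) : Submodule ℂ ℓ²) : Set ℓ²) := by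
      rw [← Submodule.topologicalClosure_coe]; exact hx
    have hb := bound_of_closure (ContinuousLinearMap.id ℂ ℓ² - orthProj _ hKΨ) (μ / (s - μ)) _
      ?_ hx'
    · simpa using hb
    · rintro y hy
      obtain ⟨f, rfl⟩ := hy
      have h1 : (UΨ f) ∈ (LinearMap.range (UΨ : H →ₗ[ℂ] ℓ²)).topologicalClosure :=
        (LinearMap.range (UΨ : H →ₗ[ℂ] ℓ²)).le_topologicalClosure (LinearMap.mem_range_self _ f)
      have h2 := norm_sub_orthProj_le hKΨ (UΦ f) (UΨ f) h1
      have h3 := haux f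
      have h4 := hUΦlow f
      have h5 : μ * ‖f‖ ≤ (μ / (s - μ)) * ‖UΦ f‖ := by
        rw [div_mul_eq_mul_div, le_div_iff₀ hsμ]
        nlinarith [mul_le_mul_of_nonneg_left h4 hμ0, mul_nonneg hμ0 (norm_nonneg f)]
      calc ‖(ContinuousLinearMap.id ℂ ℓ² - orthProj _ hKΨ) (UΦ f)‖
          = ‖UΦ f - orthProj _ hKΨ (UΦ f)‖ := by
            simp [ContinuousLinearMap.sub_apply]
        _ ≤ ‖UΦ f - UΨ f‖ := h2
        _ ≤ μ * ‖f‖ := h3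
        _ ≤ (μ / (s - μ)) * ‖UΦ f‖ := h5
  have hGapΨ : ∀ x ∈ (LinearMap.range (UΨ : H →ₗ[ℂ] ℓ²)).topologicalClosure,
      ‖x - orthProj _ hKΦ x‖ ≤ (μ / (s - μ)) * ‖x‖ := by
    intro x hx
    have hx' : x ∈ closure ((LinearMap.range (UΨ : H →ₗ[ℂ] ℓ²) : Submodule ℂ ℓ²) : Set ℓ²) := by
      rw [← Submodule.topologicalClosure_coe]; exact hx
    have hb := bound_of_closure (ContinuousLinearMap.id ℂ ℓ² - orthProj _ hKΦ) (μ / (s - μ)) _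
      ?_ hx'
    · simpa using hb
    · rintro y hy
      obtain ⟨f, rfl⟩ := hy
      have h1 : (UΦ f) ∈ (LinearMap.range (UΦ : H →ₗ[ℂ] ℓ²)).topologicalClosure :=
        (LinearMap.range (UΦ : H →ₗ[ℂ] ℓ²)).le_topologicalClosure (LinearMap.mem_range_self _ f)
      have h2 := norm_sub_orthProj_le hKΦ (UΨ f) (UΦ f) h1
      have h3 : ‖UΨ f - UΦ f‖ ≤ μ * ‖f‖ := by rw [norm_sub_rev]; exact haux f
      have h4 := hUΨlow f
      have h5 : μ * ‖f‖ ≤ (μ / (s - μ)) * ‖UΨ f‖ := by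
        rw [div_mul_eq_mul_div, le_div_iff₀ hsμ]
        nlinarith [mul_le_mul_of_nonneg_left h4 hμ0]
      calc ‖(ContinuousLinearMap.id ℂ ℓ² - orthProj _ hKΦ) (UΨ f)‖
          = ‖UΨ f - orthProj _ hKΦ (UΨ f)‖ := by
            simp [ContinuousLinearMap.sub_apply]
        _ ≤ ‖UΨ f - UΦ f‖ := h2
        _ ≤ μ * ‖f‖ := h3
        _ ≤ (μ / (s - μ)) * ‖UΨ f‖ := h5
  have hQQ' : ∀ c : ℓ², ‖orthProj _ hKΦ c - orthProj _ hKΨ c‖ ≤ (μ / (s - μ)) * ‖c‖ :=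
    proj_diff_bound hKΦ hKΨ (div_nonneg hμ0 hsμ.le) hGapΦ hGapΨ
  -- difference bound on KΨ
  have hDK : ∀ x ∈ (LinearMap.range (UΨ : H →ₗ[ℂ] ℓ²)).topologicalClosure,
      ‖(SΦinv ∘L TΦ - SΨinv ∘L TΨ) x‖ ≤ (μ / (s * (s - μ))) * ‖x‖ := by
    intro x hx
    have hx' : x ∈ closure ((LinearMap.range (UΨ : H →ₗ[ℂ] ℓ²) : Submodule ℂ ℓ²) : Set ℓ²) := by
      rw [← Submodule.topologicalClosure_coe]; exact hx
    refine bound_of_closure _ _ _ ?_ hx'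
    rintro y hy
    obtain ⟨g, rfl⟩ := hy
    have e1 : SΨinv (TΨ (UΨ g)) = g := by
      have h0 := congrArg (fun L : H →L[ℂ] H => L g) hSΨ2
      simpa [hSΨ, ContinuousLinearMap.comp_apply] using h0
    have e0 : SΦinv (TΦ (UΦ g)) = g := by
      have h0 := congrArg (fun L : H →L[ℂ] H => L g) hSΦ2
      simpa [hSΦ, ContinuousLinearMap.comp_apply] using h0
    have e2 : (SΦinv ∘L TΦ - SΨinv ∘L TΨ) (UΨ g) = SΦinv (TΦ (UΨ g - UΦ g)) := by
      rw [map_sub TΦ, map_sub SΦinv, e0]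
      simp [ContinuousLinearMap.sub_apply, ContinuousLinearMap.comp_apply, e1]
    calc ‖(SΦinv ∘L TΦ - SΨinv ∘L TΨ) (UΨ g)‖ = ‖SΦinv (TΦ (UΨ g - UΦ g))‖ := by rw [e2]
      _ ≤ ‖UΨ g - UΦ g‖ / s := by
          rw [le_div_iff₀ hs]
          have h0 := hXb (UΨ g - UΦ g)
          linarith
      _ ≤ (μ * ‖g‖) / s := by
          have h3 : ‖UΨ g - UΦ g‖ ≤ μ * ‖g‖ := by rw [norm_sub_rev]; exact haux g
          gcongr
      _ ≤ (μ / (s * (s - μ))) * ‖UΨ g‖ := by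
          have h4 := hUΨlow g
          rw [div_mul_eq_mul_div, div_le_div_iff₀ hs (mul_pos hs hsμ)]
          nlinarith [mul_le_mul_of_nonneg_left h4 hμ0, hs.le,
            mul_nonneg hμ0 (norm_nonneg g)]
  -- main pointwise bound
  have hmain : ∀ c : ℓ², ‖(SΦinv ∘L TΦ - SΨinv ∘L TΨ) c‖ ≤ (2 * μ / (s * (s - μ))) * ‖c‖ := by
    intro c
    have hdec : (SΦinv ∘L TΦ - SΨinv ∘L TΨ) c
        = SΦinv (TΦ (orthProj _ hKΦ c - orthProj _ hKΨ c))
          + (SΦinv ∘L TΦ - SΨinv ∘L TΨ) (orthProj _ hKΨ c) := by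
      rw [map_sub TΦ, map_sub SΦinv]
      simp only [ContinuousLinearMap.sub_apply, ContinuousLinearMap.comp_apply]
      rw [← hTΦker, ← hTΨker]
      abel
    have hb1 : ‖SΦinv (TΦ (orthProj _ hKΦ c - orthProj _ hKΨ c))‖ ≤ (μ / (s - μ)) * ‖c‖ / s := by
      rw [le_div_iff₀ hs]
      have h0 := hXb (orthProj _ hKΦ c - orthProj _ hKΨ c)
      have h1 := hQQ' c
      linarith
    have hb2 : ‖(SΦinv ∘L TΦ - SΨinv ∘L TΨ) (orthProj _ hKΨ c)‖
        ≤ (μ / (s * (s - μ))) * ‖c‖ := by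
      have h0 := hDK (orthProj _ hKΨ c) (orthProj_mem hKΨ c)
      have h1 := orthProj_norm_le hKΨ c
      have h2 : (μ / (s * (s - μ))) * ‖orthProj _ hKΨ c‖ ≤ (μ / (s * (s - μ))) * ‖c‖ :=
        mul_le_mul_of_nonneg_left h1 (by positivity)
      linarith
    calc ‖(SΦinv ∘L TΦ - SΨinv ∘L TΨ) c‖
        ≤ ‖SΦinv (TΦ (orthProj _ hKΦ c - orthProj _ hKΨ c))‖
          + ‖(SΦinv ∘L TΦ - SΨinv ∘L TΨ) (orthProj _ hKΨ c)‖ := by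
          rw [hdec]; exact norm_add_le _ _
      _ ≤ (μ / (s - μ)) * ‖c‖ / s + (μ / (s * (s - μ))) * ‖c‖ := add_le_add hb1 hb2
      _ = (2 * μ / (s * (s - μ))) * ‖c‖ := by field_simp; ring
  -- final assembly
  have hrhs : 0 ≤ 2 * μ * ‖A1‖ / (s * (s - μ)) + ‖A1 - A2‖ / (s - μ) :=
    add_nonneg (div_nonneg (by positivity) (mul_pos hs hsμ).le)
      (div_nonneg (norm_nonneg _) hsμ.le)
  refine ContinuousLinearMap.opNorm_le_bound _ hrhs ?_
  intro c
  have hsplit : (adjoint A1 ∘L (SΦinv ∘L TΦ) - adjoint A2 ∘L (SΨinv ∘L TΨ)) c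
      = adjoint A1 ((SΦinv ∘L TΦ - SΨinv ∘L TΨ) c) + adjoint (A1 - A2) (SΨinv (TΨ c)) := by
    simp only [ContinuousLinearMap.sub_apply, ContinuousLinearMap.comp_apply, map_sub]
    abel
  have h1 : ‖adjoint A1 ((SΦinv ∘L TΦ - SΨinv ∘L TΨ) c)‖
      ≤ ‖A1‖ * ((2 * μ / (s * (s - μ))) * ‖c‖) := by
    calc ‖adjoint A1 ((SΦinv ∘L TΦ - SΨinv ∘L TΨ) c)‖
        ≤ ‖adjoint A1‖ * ‖(SΦinv ∘L TΦ - SΨinv ∘L TΨ) c‖ := le_opNorm _ _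
      _ = ‖A1‖ * ‖(SΦinv ∘L TΦ - SΨinv ∘L TΨ) c‖ := by rw [adjoint.norm_map]
      _ ≤ ‖A1‖ * ((2 * μ / (s * (s - μ))) * ‖c‖) :=
          mul_le_mul_of_nonneg_left (hmain c) (norm_nonneg A1)
  have h2 : ‖adjoint (A1 - A2) (SΨinv (TΨ c))‖ ≤ ‖A1 - A2‖ * (‖c‖ / (s - μ)) := by
    calc ‖adjoint (A1 - A2) (SΨinv (TΨ c))‖
        ≤ ‖adjoint (A1 - A2)‖ * ‖SΨinv (TΨ c)‖ := le_opNorm _ _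
      _ = ‖A1 - A2‖ * ‖SΨinv (TΨ c)‖ := by rw [adjoint.norm_map]
      _ ≤ ‖A1 - A2‖ * (‖c‖ / (s - μ)) := by
          refine mul_le_mul_of_nonneg_left ?_ (norm_nonneg _)
          rw [le_div_iff₀ hsμ]
          have h0 := hYb c
          linarith
  have heq : ‖A1‖ * ((2 * μ / (s * (s - μ))) * ‖c‖) + ‖A1 - A2‖ * (‖c‖ / (s - μ))
      = (2 * μ * ‖A1‖ / (s * (s - μ)) + ‖A1 - A2‖ / (s - μ)) * ‖c‖ := by
    field_simp
  calc ‖(adjoint A1 ∘L (SΦinv ∘L TΦ) - adjoint A2 ∘L (SΨinv ∘L TΨ)) c‖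
      = ‖adjoint A1 ((SΦinv ∘L TΦ - SΨinv ∘L TΨ) c) + adjoint (A1 - A2) (SΨinv (TΨ c))‖ := by
        rw [hsplit]
    _ ≤ ‖adjoint A1 ((SΦinv ∘L TΦ - SΨinv ∘L TΨ) c)‖
        + ‖adjoint (A1 - A2) (SΨinv (TΨ c))‖ := norm_add_le _ _
    _ ≤ (2 * μ * ‖A1‖ / (s * (s - μ)) + ‖A1 - A2‖ / (s - μ)) * ‖c‖ := by
        rw [← heq]; exact add_le_add h1 h2


end
end

section
/- Let Φ be a frame for H with lower bound m_Φ, Ψ a Bessel sequence with ‖T_Φ − T_Ψ‖ ≤ μ < √m_Φ, and A ∈ B(H) with ‖Id − A‖ < 1 having approximation rate ε = ‖Id − A‖. Then the synthesis operators of the canonical dual of Φ and the canonical approximately dual Ψ₀^{ad}(A) of Ψ satisfy ‖S_Φ⁻¹T_Φ − A* S_Ψ⁻¹ T_Ψ‖ ≤ (2μ‖A‖ + ε√m_Φ)/(√m_Φ(√m_Φ − μ)). -/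
open ContinuousLinearMap MeasureTheory
open scoped InnerProductSpace ComplexConjugate

noncomputable section

variable {H : Type} [NormedAddCommGroup H] [InnerProductSpace ℂ H] [CompleteSpace H]

lemma lp_norm_sq (x : ℓ²) : ‖x‖ ^ 2 = ∑' n, ‖x n‖ ^ 2 := by
  have h := lp.norm_rpow_eq_tsum (p := 2) (by norm_num) x
  simpa [Real.rpow_two] using h

variable {E F : Type} [NormedAddCommGroup E] [InnerProductSpace ℂ E] [CompleteSpace E]
  [NormedAddCommGroup F] [InnerProductSpace ℂ F] [CompleteSpace F]

/-- self-adjoint idempotent has norm ≤ 1 pointwise -/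
lemma idem_norm_le (Q : F →L[ℂ] F) (hadj : adjoint Q = Q) (hidem : Q ∘L Q = Q) :
    ‖Q‖ ≤ 1 := by
  refine opNorm_le_bound _ zero_le_one fun x => ?_
  rw [one_mul]
  have h1 : (‖Q x‖ : ℝ) ^ 2 = RCLike.re (⟪Q x, Q x⟫_ℂ) := by
    rw [inner_self_eq_norm_sq]
  have h2 : RCLike.re (⟪Q x, Q x⟫_ℂ) = RCLike.re (⟪x, Q x⟫_ℂ) := by
    rw [← adjoint_inner_right, hadj, ← comp_apply, hidem]
  have h3 : RCLike.re (⟪x, Q x⟫_ℂ) ≤ ‖x‖ * ‖Q x‖ :=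
    le_trans (RCLike.re_le_norm _) (norm_inner_le_norm x (Q x))
  rcases eq_or_lt_of_le (norm_nonneg (Q x)) with h | h
  · rw [← h]; exact norm_nonneg x
  · nlinarith

lemma synth_bound (U : E →L[ℂ] F) (Sinv : E →L[ℂ] E) (m : ℝ) (hm : 0 < m)
    (hlow : ∀ f : E, m * ‖f‖ ^ 2 ≤ ‖U f‖ ^ 2)
    (h1 : (adjoint U ∘L U) ∘L Sinv = ContinuousLinearMap.id ℂ E)
    (h2 : Sinv ∘L (adjoint U ∘L U) = ContinuousLinearMap.id ℂ E) :
    adjoint Sinv = Sinv ∧ ‖Sinv‖ ≤ 1 / m ∧ ‖Sinv ∘L adjoint U‖ ≤ 1 / Real.sqrt m := by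
  set S := adjoint U ∘L U with hS
  have hSadj : adjoint S = S := by rw [hS, adjoint_comp, adjoint_adjoint]
  -- lower bound for S
  have hSlow : ∀ f : E, m * ‖f‖ ≤ ‖S f‖ := by
    intro f
    have e1 : (‖U f‖ : ℝ) ^ 2 = RCLike.re (⟪f, S f⟫_ℂ) := by
      rw [hS, comp_apply, adjoint_inner_right, inner_self_eq_norm_sq]
    have e2 : RCLike.re (⟪f, S f⟫_ℂ) ≤ ‖f‖ * ‖S f‖ :=
      le_trans (RCLike.re_le_norm _) (norm_inner_le_norm f (S f))
    have e3 := hlow f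
    rcases eq_or_lt_of_le (norm_nonneg f) with h | h
    · rw [← h, mul_zero]; exact norm_nonneg _
    · nlinarith
  -- Sinv bound
  have hSinv : ‖Sinv‖ ≤ 1 / m := by
    refine opNorm_le_bound _ (by positivity) fun g => ?_
    have e1 : S (Sinv g) = g := by rw [← comp_apply, h1]; rfl
    have e2 := hSlow (Sinv g)
    rw [e1] at e2
    rw [div_mul_eq_mul_div, one_mul, le_div_iff₀ hm]
    nlinarith
  -- Sinv self-adjoint
  have h1a : adjoint Sinv ∘L S = ContinuousLinearMap.id ℂ E := by
    have := congrArg adjoint h1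
    rwa [adjoint_comp, hSadj, adjoint_id] at this
  have hptw1 : ∀ x, S (Sinv x) = x := fun x => by rw [← comp_apply, h1]; rfl
  have hptw1a : ∀ x, adjoint Sinv (S x) = x := fun x => by rw [← comp_apply, h1a]; rfl
  have hptw2 : ∀ x, Sinv (S x) = x := fun x => by rw [← comp_apply, h2]; rfl
  have hSinvadj : adjoint Sinv = Sinv := by
    ext x
    calc adjoint Sinv x = adjoint Sinv (S (Sinv x)) := by rw [hptw1]
      _ = Sinv x := hptw1a _
  refine ⟨hSinvadj, hSinv, ?_⟩
  set B := Sinv ∘L adjoint U with hB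
  have hBB : B ∘L adjoint B = Sinv := by
    have e : adjoint B = U ∘L Sinv := by rw [hB, adjoint_comp, adjoint_adjoint, hSinvadj]
    ext x
    simp only [comp_apply, e, hB]
    rw [← hB, e]; exact hptw2 (Sinv x)
  have hn : ‖B‖ * ‖B‖ ≤ 1 / m := by
    have e1 := norm_adjoint_comp_self (adjoint B)
    rw [adjoint_adjoint, hBB] at e1
    have e2 : ‖adjoint B‖ = ‖B‖ := by
      exact LinearIsometryEquiv.norm_map (ContinuousLinearMap.adjoint (𝕜 := ℂ) (E := F) (F := E)) B
    rw [e2] at e1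
    rw [← e1]; exact hSinv
  have : ‖B‖ ≤ Real.sqrt (1 / m) := by
    rw [← Real.sqrt_mul_self (norm_nonneg B)]
    exact Real.sqrt_le_sqrt hn
  rwa [one_div, Real.sqrt_inv, ← one_div] at this


set_option maxHeartbeats 1000000 in
theorem stmt12
    (φ ψ : ℕ → H) (mΦ MΦ MΨ μ : ℝ)
    (UΦ UΨ : H →L[ℂ] ℓ²) (TΦ TΨ : ℓ² →L[ℂ] H)
    (SΦ SΦinv SΨ SΨinv A : H →L[ℂ] H)
    (hUΦ : IsAnalysis φ UΦ) (hUΨ : IsAnalysis ψ UΨ)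
    (hTΦ : TΦ = adjoint UΦ) (hTΨ : TΨ = adjoint UΨ)
    (hSΦ : SΦ = TΦ ∘L UΦ) (hSΨ : SΨ = TΨ ∘L UΨ)
    (hSΦ1 : SΦ ∘L SΦinv = ContinuousLinearMap.id ℂ H)
    (hSΦ2 : SΦinv ∘L SΦ = ContinuousLinearMap.id ℂ H)
    (hSΨ1 : SΨ ∘L SΨinv = ContinuousLinearMap.id ℂ H)
    (hSΨ2 : SΨinv ∘L SΨ = ContinuousLinearMap.id ℂ H)
    (hΦ : IsFrame φ mΦ MΦ) (hΨ : IsBessel ψ MΨ)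
    (hμ : μ < Real.sqrt mΦ) (hper : ‖TΦ - TΨ‖ ≤ μ)
    (hA : ‖ContinuousLinearMap.id ℂ H - A‖ < 1) :
    ‖SΦinv ∘L TΦ - adjoint A ∘L (SΨinv ∘L TΨ)‖ ≤
      (2 * μ * ‖A‖ + ‖ContinuousLinearMap.id ℂ H - A‖ * Real.sqrt mΦ) /
        (Real.sqrt mΦ * (Real.sqrt mΦ - μ)) := by
  obtain ⟨hm, hMpos, hfr⟩ := hΦ
  subst hTΦ hTΨ hSΦ hSΨ
  set a := Real.sqrt mΦ with ha
  have ha0 : 0 < a := Real.sqrt_pos.mpr hm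
  have hmΦa : mΦ = a ^ 2 := (Real.sq_sqrt hm.le).symm
  have hμ0 : 0 ≤ μ := le_trans (norm_nonneg _) hper
  have haμ : 0 < a - μ := sub_pos.mpr hμ
  -- frame lower bound in operator form
  have hUΦn : ∀ f : H, ‖UΦ f‖ ^ 2 = ∑' n, ‖(inner ℂ (φ n) f : ℂ)‖ ^ 2 := fun f => by
    rw [lp_norm_sq]; exact tsum_congr fun n => by rw [hUΦ f n]
  have hlowΦ : ∀ f : H, mΦ * ‖f‖ ^ 2 ≤ ‖UΦ f‖ ^ 2 := fun f => by
    rw [hUΦn]; exact (hfr f).1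
  -- perturbation: norm of UΦ - UΨ
  have hUdiff : ‖UΦ - UΨ‖ ≤ μ := by
    have e : UΦ - UΨ = adjoint (adjoint UΦ - adjoint UΨ) := by
      rw [map_sub, adjoint_adjoint, adjoint_adjoint]
    rw [e]
    exact le_trans (le_of_eq (LinearIsometryEquiv.norm_map
      (ContinuousLinearMap.adjoint (𝕜 := ℂ) (E := lp (fun _ : ℕ => ℂ) 2) (F := H)) _)) hper
  have hUdiff' : ‖UΨ - UΦ‖ ≤ μ := by rwa [norm_sub_rev]
  -- lower frame bound for Ψ
  have hlowΨ : ∀ f : H, (a - μ) ^ 2 * ‖f‖ ^ 2 ≤ ‖UΨ f‖ ^ 2 := by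
    intro f
    have e1 : a * ‖f‖ ≤ ‖UΦ f‖ := by
      have h := Real.sqrt_le_sqrt (hlowΦ f)
      rwa [Real.sqrt_mul hm.le, Real.sqrt_sq (norm_nonneg f), Real.sqrt_sq (norm_nonneg _)]
        at h
    have e2 : ‖(UΦ - UΨ) f‖ ≤ μ * ‖f‖ :=
      le_trans (le_opNorm _ f) (mul_le_mul_of_nonneg_right hUdiff (norm_nonneg f))
    have e3 : (a - μ) * ‖f‖ ≤ ‖UΨ f‖ := by
      have e4 := norm_sub_norm_le (UΦ f) (UΨ f)
      have e5 : UΦ f - UΨ f = (UΦ - UΨ) f := by simp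
      rw [e5] at e4
      nlinarith
    nlinarith [norm_nonneg (UΨ f), mul_nonneg haμ.le (norm_nonneg f)]
  obtain ⟨hΦadj, hΦinv, hΦB⟩ := synth_bound UΦ SΦinv mΦ hm hlowΦ hSΦ1 hSΦ2
  obtain ⟨hΨadj, hΨinv, hΨB⟩ := synth_bound UΨ SΨinv ((a - μ) ^ 2) (by positivity) hlowΨ hSΨ1 hSΨ2
  rw [Real.sqrt_sq haμ.le] at hΨB
  -- pointwise inverse identities
  have hΨ1' : ∀ x : H, adjoint UΨ (UΨ (SΨinv x)) = x := fun x => by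
    have := ContinuousLinearMap.ext_iff.mp hSΨ1 x
    simpa [comp_apply] using this
  have hΨ2' : ∀ x : H, SΨinv (adjoint UΨ (UΨ x)) = x := fun x => by
    have := ContinuousLinearMap.ext_iff.mp hSΨ2 x
    simpa [comp_apply] using this
  have hΦ2' : ∀ x : H, SΦinv (adjoint UΦ (UΦ x)) = x := fun x => by
    have := ContinuousLinearMap.ext_iff.mp hSΦ2 x
    simpa [comp_apply] using this
  -- the projection Q = id - P
  set C := SΨinv ∘L adjoint UΨ with hC
  set B := SΦinv ∘L adjoint UΦ with hB
  set P := UΨ ∘L C with hP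
  set Q := ContinuousLinearMap.id ℂ ℓ² - P with hQdef
  have hQadj : adjoint Q = Q := by
    rw [hQdef, map_sub, adjoint_id]
    congr 1
    ext x
    simp [hP, hC, adjoint_comp, adjoint_adjoint, hΨadj, comp_apply]
  have hQidem : Q ∘L Q = Q := by
    ext x
    simp [hQdef, hP, hC, comp_apply, sub_apply, map_sub, hΨ2']
  have hQ : ‖Q‖ ≤ 1 := idem_norm_le Q hQadj hQidem
  -- key algebraic decomposition
  have hkey : B - adjoint A ∘L C =
      (ContinuousLinearMap.id ℂ H - adjoint A) ∘L B
      + adjoint A ∘L (SΦinv ∘L ((adjoint UΦ - adjoint UΨ) ∘L Q)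
          + B ∘L ((UΨ - UΦ) ∘L C)) := by
    ext x
    simp only [comp_apply, sub_apply, add_apply, id_apply, map_sub, map_add, hB, hC, hP, hQdef,
      hΨ1', hΦ2']
    abel
  -- norms
  set ε := ‖ContinuousLinearMap.id ℂ H - A‖ with hε
  have hε0 : 0 ≤ ε := norm_nonneg _
  have hadjAnorm : ‖adjoint A‖ = ‖A‖ :=
    LinearIsometryEquiv.norm_map (ContinuousLinearMap.adjoint (𝕜 := ℂ) (E := H) (F := H)) A
  have hadjId : ‖ContinuousLinearMap.id ℂ H - adjoint A‖ = ε := by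
    have e : ContinuousLinearMap.id ℂ H - adjoint A
        = adjoint (ContinuousLinearMap.id ℂ H - A) := by rw [map_sub, adjoint_id]
    rw [e, hε]
    exact LinearIsometryEquiv.norm_map (ContinuousLinearMap.adjoint (𝕜 := ℂ) (E := H) (F := H)) _
  have t1 : ‖(ContinuousLinearMap.id ℂ H - adjoint A) ∘L B‖ ≤ ε * (1 / a) :=
    le_trans (opNorm_comp_le _ _)
      (mul_le_mul (le_of_eq hadjId) hΦB (norm_nonneg _) hε0)
  have eQ : ‖(adjoint UΦ - adjoint UΨ) ∘L Q‖ ≤ μ * 1 :=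
    le_trans (opNorm_comp_le _ _) (mul_le_mul hper hQ (norm_nonneg _) hμ0)
  have hM1 : ‖SΦinv ∘L ((adjoint UΦ - adjoint UΨ) ∘L Q)‖ ≤ 1 / mΦ * (μ * 1) :=
    le_trans (opNorm_comp_le _ _)
      (mul_le_mul hΦinv eQ (norm_nonneg _) (by positivity))
  have eC : ‖(UΨ - UΦ) ∘L C‖ ≤ μ * (1 / (a - μ)) :=
    le_trans (opNorm_comp_le _ _) (mul_le_mul hUdiff' hΨB (norm_nonneg _) hμ0)
  have hM2 : ‖B ∘L ((UΨ - UΦ) ∘L C)‖ ≤ 1 / a * (μ * (1 / (a - μ))) :=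
    le_trans (opNorm_comp_le _ _)
      (mul_le_mul hΦB eC (norm_nonneg _) (by positivity))
  have hM : ‖SΦinv ∘L ((adjoint UΦ - adjoint UΨ) ∘L Q) + B ∘L ((UΨ - UΦ) ∘L C)‖
      ≤ 1 / mΦ * (μ * 1) + 1 / a * (μ * (1 / (a - μ))) :=
    le_trans (norm_add_le _ _) (add_le_add hM1 hM2)
  have t2 : ‖adjoint A ∘L (SΦinv ∘L ((adjoint UΦ - adjoint UΨ) ∘L Q)
      + B ∘L ((UΨ - UΦ) ∘L C))‖
      ≤ ‖A‖ * (1 / mΦ * (μ * 1) + 1 / a * (μ * (1 / (a - μ)))) :=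
    le_trans (opNorm_comp_le _ _)
      (mul_le_mul (le_of_eq hadjAnorm) hM (norm_nonneg _) (norm_nonneg A))
  have numeric : ε * (1 / a) + ‖A‖ * (1 / mΦ * (μ * 1) + 1 / a * (μ * (1 / (a - μ))))
      ≤ (2 * μ * ‖A‖ + ε * a) / (a * (a - μ)) := by
    rw [hmΦa, ← sub_nonneg]
    have hA0 : 0 ≤ ‖A‖ := norm_nonneg A
    have key : (2 * μ * ‖A‖ + ε * a) / (a * (a - μ))
        - (ε * (1 / a) + ‖A‖ * (1 / a ^ 2 * (μ * 1) + 1 / a * (μ * (1 / (a - μ)))))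
        = (ε * a * μ + ‖A‖ * μ ^ 2) / (a ^ 2 * (a - μ)) := by
      field_simp
      ring
    rw [key]
    positivity
  calc ‖B - adjoint A ∘L C‖
      ≤ ‖(ContinuousLinearMap.id ℂ H - adjoint A) ∘L B‖
        + ‖adjoint A ∘L (SΦinv ∘L ((adjoint UΦ - adjoint UΨ) ∘L Q)
          + B ∘L ((UΨ - UΦ) ∘L C))‖ := by rw [hkey]; exact norm_add_le _ _
    _ ≤ ε * (1 / a) + ‖A‖ * (1 / mΦ * (μ * 1) + 1 / a * (μ * (1 / (a - μ)))) :=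
        add_le_add t1 t2
    _ ≤ (2 * μ * ‖A‖ + ε * a) / (a * (a - μ)) := numeric

end
end
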